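/- Suppose a substitution ζ on A = {1,…,m} has a 'good return word' v, meaning v starts with some letter c and vc occurs as a subword of ζ(b) for every b ∈ A. Then for any substitution ξ, any b, and the matrix entry M^s_{ξ,ζ}(b,c) := Φ_c^{S_ξ^t s}(ζ(b), ω), one has |M^s_{ξ,ζ}(b,c)| ≤ S_ζ^t(b,c) - (1/2)·‖ω|ξ(v)|_s‖²_{ℝ/ℤ}. -/

import Mathlib

open Matrix

/-- Distance from a real number to the nearest integer. -/
noncomputable def distToInt (τ : ℝ) : ℝ := ⨅ k : ℤ, |τ - (k : ℝ)|

/-- Population vector of a word: the number of occurrences of each letter. -/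
def popVec {m : ℕ} (v : List (Fin m)) : Fin m → ℝ := fun a => (v.count a : ℝ)

/-- Substitution matrix: `S ζ a b` is the number of occurrences of `a` in `ζ b`. -/
def subMat {m : ℕ} (ζ : Fin m → List (Fin m)) : Matrix (Fin m) (Fin m) ℝ :=
  fun a b => ((ζ b).count a : ℝ)

/-- `s`-weighted ("tiling") length of a word. -/
def wlen {m : ℕ} (s : Fin m → ℝ) (v : List (Fin m)) : ℝ := ∑ a, popVec v a * s a

/-- Twisted exponential sum `Φ_a^s(v, ω)`. -/
noncomputable def Phi {m : ℕ} (s : Fin m → ℝ) (a : Fin m) (v : List (Fin m)) (ω : ℝ) : ℂ :=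
  ∑ j : Fin v.length, (if v.get j = a then (1 : ℂ) else 0) *
    Complex.exp (-2 * Real.pi * Complex.I * ω * (wlen s (v.take j)))



/-- the unit phase factor -/
noncomputable def ph (ω x : ℝ) : ℂ := Complex.exp (-2 * Real.pi * Complex.I * ω * x)

lemma abs_ph (ω x : ℝ) : ‖ph ω x‖ = 1 := by
  rw [ph, Complex.norm_exp]
  norm_num [Complex.ext_iff]

lemma ph_add (ω x y : ℝ) : ph ω (x + y) = ph ω x * ph ω y := by
  rw [ph, ph, ph, ← Complex.exp_add]
  push_cast
  ring_nf

lemma wlen_nil {m : ℕ} (s : Fin m → ℝ) : wlen s ([] : List (Fin m)) = 0 := by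
  simp [wlen, popVec]

lemma wlen_cons {m : ℕ} (s : Fin m → ℝ) (x : Fin m) (w : List (Fin m)) :
    wlen s (x :: w) = s x + wlen s w := by
  unfold wlen popVec
  have key : ∀ a : Fin m, ((List.count a (x :: w) : ℝ)) * s a
      = (if a = x then s a else 0) + (List.count a w : ℝ) * s a := by
    intro a
    rw [List.count_cons]
    by_cases h : a = x
    · subst h
      simp only [beq_self_eq_true, if_true, if_pos rfl]
      push_cast; ring
    · have hx : (x == a) = false := by simp [Ne.symm h]
      simp only [hx, if_false, if_neg h]
      push_cast; ring
  rw [Finset.sum_congr rfl fun a _ => key a, Finset.sum_add_distrib,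
    Finset.sum_ite_eq' Finset.univ x s]
  simp

lemma wlen_append {m : ℕ} (s : Fin m → ℝ) (u w : List (Fin m)) :
    wlen s (u ++ w) = wlen s u + wlen s w := by
  induction u with
  | nil => simp [wlen_nil]
  | cons x u ih => simp [wlen_cons, ih]; ring

lemma Phi_nil {m : ℕ} (s : Fin m → ℝ) (a : Fin m) (ω : ℝ) :
    Phi s a ([] : List (Fin m)) ω = 0 := by
  simp [Phi]

lemma Phi_cons {m : ℕ} (s : Fin m → ℝ) (a x : Fin m) (w : List (Fin m)) (ω : ℝ) :
    Phi s a (x :: w) ω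
      = (if x = a then (1 : ℂ) else 0) + ph ω (s x) * Phi s a w ω := by
  rw [Phi]
  simp only [List.length_cons]
  rw [Fin.sum_univ_succ]
  congr 1
  · simp [wlen_nil]; congr
  · rw [Phi, Finset.mul_sum]
    refine Finset.sum_congr rfl fun j _ => ?_
    have h1 : (x :: w).get j.succ = w.get j := rfl
    have h2 : (x :: w).take (j.succ : ℕ) = x :: w.take j := rfl
    rw [h1, h2, wlen_cons, ph]
    push_cast
    rw [mul_add, Complex.exp_add]
    ring

lemma Phi_append {m : ℕ} (s : Fin m → ℝ) (a : Fin m) (u w : List (Fin m)) (ω : ℝ) :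
    Phi s a (u ++ w) ω = Phi s a u ω + ph ω (wlen s u) * Phi s a w ω := by
  induction u with
  | nil => simp [Phi_nil, wlen_nil, ph]
  | cons x u ih =>
    rw [List.cons_append, Phi_cons, ih, Phi_cons, wlen_cons, ph_add]
    ring

lemma Phi_abs_le {m : ℕ} (s : Fin m → ℝ) (a : Fin m) (w : List (Fin m)) (ω : ℝ) :
    ‖Phi s a w ω‖ ≤ (w.count a : ℝ) := by
  induction w with
  | nil => simp [Phi_nil]
  | cons x w ih =>
    rw [Phi_cons, List.count_cons]
    refine (norm_add_le _ _).trans ?_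
    rw [norm_mul, abs_ph, one_mul]
    push_cast
    have : ‖(if x = a then (1:ℂ) else 0)‖ = if x = a then (1:ℝ) else 0 := by
      by_cases h : x = a <;> simp [h]
    rw [this]
    by_cases h : x = a
    · have hx : (x == a) = true := by simp [h]
      simp only [hx, if_pos h, if_true]
      push_cast; linarith
    · have hx : (x == a) = false := by simp [h]
      simp only [hx, if_neg h, if_false]
      push_cast; linarith

lemma wlen_flatMap {m : ℕ} (ξ : Fin m → List (Fin m)) (s : Fin m → ℝ) (w : List (Fin m)) :
    wlen ((subMat ξ)ᵀ *ᵥ s) w = wlen s (w.flatMap ξ) := by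
  induction w with
  | nil => simp [wlen_nil]
  | cons x w ih =>
    rw [List.flatMap_cons, wlen_append, wlen_cons, ih]
    have hx : ((subMat ξ)ᵀ *ᵥ s) x = wlen s (ξ x) := by
      simp [mulVec, dotProduct, subMat, wlen, popVec]
    rw [hx]

lemma distToInt_eq (τ : ℝ) : distToInt τ = |τ - round τ| := by
  have hb : BddBelow (Set.range fun k : ℤ => |τ - (k : ℝ)|) := by
    refine ⟨0, ?_⟩
    rintro x ⟨k, rfl⟩
    positivity
  refine le_antisymm (ciInf_le hb (round τ)) (le_ciInf fun k => ?_)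
  by_cases h : k = round τ
  · simp [h]
  · have h1 : (1 : ℝ) ≤ |(k : ℝ) - (round τ : ℝ)| := by
      have : (1 : ℤ) ≤ |k - round τ| := Int.one_le_abs (sub_ne_zero.mpr h)
      exact_mod_cast (by push_cast at this ⊢; exact this)
    have h2 : |τ - (round τ : ℝ)| ≤ 1 / 2 := abs_sub_round τ
    have h3 : |(k : ℝ) - (round τ : ℝ)| ≤ |(k : ℝ) - τ| + |τ - (round τ : ℝ)| :=
      abs_sub_le _ _ _
    have h4 : |τ - (k : ℝ)| = |(k : ℝ) - τ| := abs_sub_comm _ _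
    linarith

lemma distToInt_nonneg (τ : ℝ) : 0 ≤ distToInt τ := by
  rw [distToInt_eq]; positivity

lemma distToInt_le_half (τ : ℝ) : distToInt τ ≤ 1 / 2 := by
  rw [distToInt_eq]; exact abs_sub_round τ

lemma cos_pi_bound {t : ℝ} (hth : |t| ≤ 1 / 2) :
    |Real.cos (Real.pi * t)| ≤ 1 - t ^ 2 / 4 := by
  have hpi : (0:ℝ) < Real.pi := Real.pi_pos
  have habs : |Real.pi * t| ≤ Real.pi / 2 := by
    rw [abs_mul, abs_of_pos hpi]
    calc Real.pi * |t| ≤ Real.pi * (1/2) := by nlinarith [abs_nonneg t]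
    _ = Real.pi / 2 := by ring
  have hnn : 0 ≤ Real.cos (Real.pi * t) := by
    apply Real.cos_nonneg_of_neg_pi_div_two_le_of_le
    · linarith [abs_le.mp habs |>.1]
    · linarith [abs_le.mp habs |>.2]
  rw [abs_of_nonneg hnn]
  have hjor : |t| ≤ Real.sin (Real.pi * |t| / 2) := by
    have := Real.mul_le_sin (x := Real.pi * |t| / 2) (by positivity)
      (by nlinarith [abs_nonneg t])
    calc |t| = 2 / Real.pi * (Real.pi * |t| / 2) := by field_simp
    _ ≤ Real.sin (Real.pi * |t| / 2) := this
  have hsq : t ^ 2 ≤ Real.sin (Real.pi * t / 2) ^ 2 := by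
    have habs2 : Real.sin (Real.pi * t / 2) ^ 2 = Real.sin (Real.pi * |t| / 2) ^ 2 := by
      rcases le_or_gt 0 t with h | h
      · rw [abs_of_nonneg h]
      · rw [abs_of_neg h]
        have h3 : Real.pi * -t / 2 = -(Real.pi * t / 2) := by ring
        rw [h3, Real.sin_neg]
        ring
    rw [habs2]
    have h0 : 0 ≤ |t| := abs_nonneg t
    have hm := mul_le_mul hjor hjor h0 (h0.trans hjor)
    nlinarith [sq_abs t]
  have hcos2 : Real.cos (Real.pi * t) = 1 - 2 * Real.sin (Real.pi * t / 2) ^ 2 := by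
    have h1 := Real.cos_two_mul (Real.pi * t / 2)
    have h0 : 2 * (Real.pi * t / 2) = Real.pi * t := by ring
    rw [h0] at h1
    have h2 := Real.sin_sq_add_cos_sq (Real.pi * t / 2)
    linarith
  rw [hcos2]
  nlinarith [sq_nonneg t]

lemma abs_cos_pi_le (τ : ℝ) :
    |Real.cos (Real.pi * τ)| ≤ 1 - distToInt τ ^ 2 / 4 := by
  have hd : distToInt τ = |τ - (round τ : ℝ)| := distToInt_eq τ
  have hth : |τ - (round τ : ℝ)| ≤ 1 / 2 := abs_sub_round τ
  have hsplit : Real.pi * τ = (round τ : ℝ) * Real.pi - -(Real.pi * (τ - (round τ : ℝ))) := by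
    ring
  have hcos : |Real.cos (Real.pi * τ)| = |Real.cos (Real.pi * (τ - (round τ : ℝ)))| := by
    rw [hsplit, Real.cos_int_mul_pi_sub, abs_mul, Real.cos_neg]
    have hone : |((-1 : ℝ)) ^ (round τ)| = 1 := by
      rcases Int.even_or_odd (round τ) with he | ho
      · rw [he.neg_one_zpow]; norm_num
      · rw [ho.neg_one_zpow]; norm_num
    rw [hone, one_mul]
  rw [hcos, hd, sq_abs]
  exact cos_pi_bound hth

lemma abs_one_add_exp (θ : ℝ) :
    ‖1 + Complex.exp ((θ : ℂ) * Complex.I)‖ = 2 * |Real.cos (θ / 2)| := by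
  have key : (1 : ℂ) + Complex.exp ((θ : ℂ) * Complex.I)
      = Complex.exp (((θ / 2 : ℝ) : ℂ) * Complex.I) * (2 * Complex.cos ((θ / 2 : ℝ) : ℂ)) := by
    rw [Complex.two_cos, mul_add, ← Complex.exp_add, ← Complex.exp_add]
    have e1 : ((θ / 2 : ℝ) : ℂ) * Complex.I + ((θ / 2 : ℝ) : ℂ) * Complex.I
        = (θ : ℂ) * Complex.I := by push_cast; ring
    have e2 : ((θ / 2 : ℝ) : ℂ) * Complex.I + -((θ / 2 : ℝ) : ℂ) * Complex.I = 0 := by ring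
    rw [e1, e2, Complex.exp_zero]
    ring
  rw [key, norm_mul, Complex.norm_exp_ofReal_mul_I, one_mul, norm_mul,
    ← Complex.ofReal_cos, Complex.norm_real]
  simp

lemma abs_one_add_ph (ω x : ℝ) :
    ‖1 + ph ω x‖ ≤ 2 - (1 / 2) * distToInt (ω * x) ^ 2 := by
  have hph : ph ω x = Complex.exp (((-2 * Real.pi * (ω * x) : ℝ) : ℂ) * Complex.I) := by
    rw [ph]; push_cast; ring_nf
  rw [hph, abs_one_add_exp]
  have h2 : (-2 * Real.pi * (ω * x)) / 2 = -(Real.pi * (ω * x)) := by ring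
  rw [h2, Real.cos_neg]
  have := abs_cos_pi_le (ω * x)
  linarith

theorem good_return_word_bound {m : ℕ} (ζ ξ : Fin m → List (Fin m))
    (s : Fin m → ℝ) (hs : ∀ i, 0 < s i) (ω : ℝ)
    (v : List (Fin m)) (c : Fin m) (hvc : v.head? = some c)
    (hgood : ∀ b, (v ++ [c]) <:+: ζ b) (b : Fin m) :
    ‖Phi ((subMat ξ)ᵀ *ᵥ s) c (ζ b) ω‖ ≤
      (subMat ζ) c b - (1 / 2) * (distToInt (ω * wlen s (v.flatMap ξ))) ^ 2 := by
  obtain ⟨t, rfl⟩ : ∃ t, v = c :: t := by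
    cases v with
    | nil => simp at hvc
    | cons x t =>
      simp only [List.head?_cons, Option.some_inj] at hvc
      exact ⟨t, by rw [hvc]⟩
  obtain ⟨p, q, hw⟩ := hgood b
  have hw' : ζ b = p ++ ((c :: t) ++ (c :: q)) := by
    rw [← hw]; simp
  -- abbreviations
  set s' := (subMat ξ)ᵀ *ᵥ s with hs'
  -- rewrite the distToInt argument
  rw [← wlen_flatMap ξ s (c :: t)]
  -- decompose Phi
  have hif : (if c = c then (1 : ℂ) else 0) = 1 := if_pos rfl
  have hPhi : Phi s' c (ζ b) ω
      = Phi s' c p ω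
        + ph ω (wlen s' p) * (1 + ph ω (wlen s' (c :: t)))
        + ph ω (wlen s' p) * ph ω (s' c) * Phi s' c t ω
        + ph ω (wlen s' p) * ph ω (wlen s' (c :: t)) * ph ω (s' c) * Phi s' c q ω := by
    rw [hw', Phi_append, Phi_append, Phi_cons, Phi_cons, hif]
    ring
  rw [hPhi]
  have h1 : ‖Phi s' c p ω‖ ≤ (p.count c : ℝ) := Phi_abs_le _ _ _ _
  have h2 : ‖ph ω (wlen s' p) * (1 + ph ω (wlen s' (c :: t)))‖
      ≤ 2 - (1 / 2) * distToInt (ω * wlen s' (c :: t)) ^ 2 := by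
    rw [norm_mul, abs_ph, one_mul]
    exact abs_one_add_ph ω _
  have h3 : ‖ph ω (wlen s' p) * ph ω (s' c) * Phi s' c t ω‖
      ≤ (t.count c : ℝ) := by
    rw [norm_mul, norm_mul, abs_ph, abs_ph, one_mul, one_mul]
    exact Phi_abs_le _ _ _ _
  have h4 : ‖ph ω (wlen s' p) * ph ω (wlen s' (c :: t)) * ph ω (s' c)
        * Phi s' c q ω‖ ≤ (q.count c : ℝ) := by
    rw [norm_mul, norm_mul, norm_mul, abs_ph, abs_ph, abs_ph, one_mul, one_mul, one_mul]
    exact Phi_abs_le _ _ _ _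
  have hcount : (subMat ζ) c b
      = (p.count c : ℝ) + (t.count c : ℝ) + (q.count c : ℝ) + 2 := by
    show (((ζ b).count c : ℕ) : ℝ) = _
    rw [hw']
    simp [List.count_append, List.count_cons]
    push_cast
    ring
  rw [hcount]
  have habs4 : ‖Phi s' c p ω
        + ph ω (wlen s' p) * (1 + ph ω (wlen s' (c :: t)))
        + ph ω (wlen s' p) * ph ω (s' c) * Phi s' c t ω
        + ph ω (wlen s' p) * ph ω (wlen s' (c :: t)) * ph ω (s' c) * Phi s' c q ω‖
      ≤ ‖Phi s' c p ω‖
        + ‖ph ω (wlen s' p) * (1 + ph ω (wlen s' (c :: t)))‖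
        + ‖ph ω (wlen s' p) * ph ω (s' c) * Phi s' c t ω‖
        + ‖ph ω (wlen s' p) * ph ω (wlen s' (c :: t)) * ph ω (s' c)
            * Phi s' c q ω‖ := by
    refine (norm_add_le _ _).trans (add_le_add ?_ le_rfl)
    refine (norm_add_le _ _).trans (add_le_add ?_ le_rfl)
    exact norm_add_le _ _
  linarith
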